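/- Let N ≥ 2, d ≥ 1, and let m : Fin N → ℝ be masses with mᵢ > 0 for all i. At every collision-free configuration q, the derivative of the Newtonian potential is nonzero: fderiv ℝ V q ≠ 0. (Consequently the Newtonian N-body equations have no equilibrium solutions.) -/

import Mathlib

open scoped BigOperators

/-- The Newtonian potential of `N` bodies in `ℝ^d` with masses `m`,
on the configuration space `PiLp 2 (fun _ : Fin N => EuclideanSpace ℝ (Fin d))`
(the ℓ² inner-product space of configurations). -/
noncomputable def newtonV (N d : ℕ) (m : Fin N → ℝ)
    (q : PiLp 2 (fun _ : Fin N => EuclideanSpace ℝ (Fin d))) : ℝ :=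
  -∑ i : Fin N, ∑ j ∈ Finset.Ioi i, m i * m j / ‖q i - q j‖

/-- At every collision-free configuration, the derivative of the Newtonian potential is
nonzero; consequently the Newtonian `N`-body equations have no equilibrium solutions. -/
theorem newtonV_fderiv_ne_zero
    (N d : ℕ) (hN : 2 ≤ N) (hd : 1 ≤ d)
    (m : Fin N → ℝ) (hm : ∀ i, 0 < m i)
    (q : PiLp 2 (fun _ : Fin N => EuclideanSpace ℝ (Fin d)))
    (hq : ∀ i j : Fin N, i ≠ j → q i ≠ q j) :
    fderiv ℝ (newtonV N d m) q ≠ 0 := by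
  -- V is differentiable at q
  have hdiff : DifferentiableAt ℝ (newtonV N d m) q := by
    apply DifferentiableAt.neg
    apply DifferentiableAt.fun_sum
    intro i _
    apply DifferentiableAt.fun_sum
    intro j hj
    have hij : i ≠ j := (Finset.mem_Ioi.mp hj).ne
    have hsub : DifferentiableAt ℝ (fun p : PiLp 2 (fun _ : Fin N => EuclideanSpace ℝ (Fin d)) => p i - p j) q :=
      ((PiLp.proj (𝕜 := ℝ) 2 (fun _ : Fin N => EuclideanSpace ℝ (Fin d)) i).differentiableAt).sub
        ((PiLp.proj (𝕜 := ℝ) 2 (fun _ : Fin N => EuclideanSpace ℝ (Fin d)) j).differentiableAt)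
    have hnz : q i - q j ≠ 0 := sub_ne_zero.mpr (hq i j hij)
    have hnorm : DifferentiableAt ℝ (fun p : PiLp 2 (fun _ : Fin N => EuclideanSpace ℝ (Fin d)) => ‖p i - p j‖) q :=
      DifferentiableAt.norm ℝ hsub hnz
    have : DifferentiableAt ℝ (fun p : PiLp 2 (fun _ : Fin N => EuclideanSpace ℝ (Fin d)) => m i * m j * ‖p i - p j‖⁻¹) q :=
      (hnorm.inv (norm_ne_zero_iff.mpr hnz)).const_mul _
    simpa [div_eq_mul_inv] using this
  -- V(q) ≠ 0 (in fact < 0)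
  have hVneg : newtonV N d m q < 0 := by
    have h01 : (⟨0, by omega⟩ : Fin N) < ⟨1, by omega⟩ := by
      simp [Fin.lt_def]
    have hpos : ∀ i : Fin N, ∀ j ∈ Finset.Ioi i, 0 ≤ m i * m j / ‖q i - q j‖ := by
      intro i j hj
      exact div_nonneg (mul_pos (hm i) (hm j)).le (norm_nonneg _)
    have hsum : 0 < ∑ i : Fin N, ∑ j ∈ Finset.Ioi i, m i * m j / ‖q i - q j‖ := by
      have hterm : 0 < ∑ j ∈ Finset.Ioi (⟨0, by omega⟩ : Fin N),
          m ⟨0, by omega⟩ * m j / ‖q ⟨0, by omega⟩ - q j‖ := by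
        apply Finset.sum_pos'
        · intro j hj; exact hpos _ j hj
        · refine ⟨⟨1, by omega⟩, Finset.mem_Ioi.mpr h01, ?_⟩
          have hne : q ⟨0, by omega⟩ ≠ q ⟨1, by omega⟩ := hq _ _ (Fin.ne_of_lt h01)
          have h1 : 0 < ‖q (⟨0, by omega⟩ : Fin N) - q ⟨1, by omega⟩‖ :=
            norm_pos_iff.mpr (sub_ne_zero.mpr hne)
          exact div_pos (mul_pos (hm _) (hm _)) h1
      calc (0:ℝ) < _ := hterm
        _ ≤ _ := Finset.single_le_sum (f := fun i => ∑ j ∈ Finset.Ioi i,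
              m i * m j / ‖q i - q j‖)
            (fun i _ => Finset.sum_nonneg (hpos i)) (Finset.mem_univ _)
    simpa [newtonV] using hsum
  -- homogeneity: V(t • q) = V(q) / t near t = 1
  have hhom : ∀ t : ℝ, 0 < t → newtonV N d m (t • q) = newtonV N d m q / t := by
    intro t ht
    simp only [newtonV, neg_div, neg_inj, Finset.sum_div]
    refine Finset.sum_congr rfl fun i _ => Finset.sum_congr rfl fun j hj => ?_
    have : (t • q) i - (t • q) j = t • (q i - q j) := by
      simp [PiLp.smul_apply, smul_sub]
    rw [this, norm_smul, Real.norm_eq_abs, abs_of_pos ht, div_div,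
      mul_comm t ‖q i - q j‖]
  -- the curve t ↦ t • q
  haveI : ContinuousSMul ℝ (PiLp 2 (fun _ : Fin N => EuclideanSpace ℝ (Fin d))) :=
    IsBoundedSMul.continuousSMul
  have hcurve : HasDerivAt (fun t : ℝ => t • q) q 1 := by
    simpa using (hasDerivAt_id (1:ℝ)).smul_const q
  intro hzero
  have hchain : HasDerivAt (fun t : ℝ => newtonV N d m (t • q)) 0 1 := by
    have h1 : (1:ℝ) • q = q := one_smul _ _
    have hf := hdiff.hasFDerivAt
    rw [← h1] at hf
    have := hf.comp_hasDerivAt (1:ℝ) hcurve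
    simp [hzero] at this
    exact this
  -- but also, near 1, the function equals V(q)/t whose derivative at 1 is -V(q)
  have heq : (fun t : ℝ => newtonV N d m (t • q)) =ᶠ[nhds (1:ℝ)]
      fun t => newtonV N d m q / t := by
    filter_upwards [eventually_gt_nhds (show (0:ℝ) < 1 by norm_num)] with t ht
    exact hhom t ht
  have hd2 : HasDerivAt (fun t : ℝ => newtonV N d m q / t) (-(newtonV N d m q)) 1 := by
    have := (hasDerivAt_inv (one_ne_zero)).const_mul (newtonV N d m q)
    simpa [div_eq_mul_inv] using this
  have hchain2 : HasDerivAt (fun t : ℝ => newtonV N d m (t • q)) (-(newtonV N d m q)) 1 :=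
    hd2.congr_of_eventuallyEq heq
  have : (0:ℝ) = -(newtonV N d m q) := hchain.unique hchain2
  linarith
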